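/- Suppose Z is a random vector in ℝ^{d_z}, V is a real random variable with atomless (continuous) distribution and cumulative distribution function F_V, h : ℝ^{d_z} × ℝ → ℝ is measurable and strictly increasing in its second argument, X = h(Z, V), and V is independent of Z. Then the conditional rank satisfies F_{X|Z}(X | Z) = F_V(V) almost surely, where F_{X|Z}(·|z) is a regular conditional distribution function of X given Z = z. -/

import Mathlib

open MeasureTheory ProbabilityTheory

/-- `F` is a regular conditional distribution function of the real random variable `X` given
the random element `Z`: for each conditioning value `z`, `F z` is monotone and
right-continuous, `F · x` is measurable, and `fun ω => F (Z ω) x` is a version of the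
conditional probability `P(X ≤ x | σ(Z))` for every `x`. -/
def IsRegCondCDF {Ω ζ : Type*} [MeasurableSpace Ω] [MeasurableSpace ζ]
    (μ : MeasureTheory.Measure Ω) (X : Ω → ℝ) (Z : Ω → ζ) (F : ζ → ℝ → ℝ) : Prop :=
  (∀ z, Monotone (F z)) ∧
  (∀ z x, ContinuousWithinAt (F z) (Set.Ici x) x) ∧
  (∀ x, Measurable fun z => F z x) ∧
  (∀ x : ℝ, (fun ω => F (Z ω) x)
    =ᵐ[μ] μ[Set.indicator {ω | X ω ≤ x} (fun _ => (1 : ℝ))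
      | MeasurableSpace.comap Z inferInstance])

/-- If `X = h(Z, V)` with `h` strictly increasing in its second argument,
`V` independent of `Z` with atomless distribution, then the conditional rank satisfies
`F_{X|Z}(X | Z) = F_V(V)` almost surely, where `F_{X|Z}` is a regular conditional
distribution function of `X` given `Z` and `F_V` is the CDF of `V`. -/
theorem conditional_rank_eq_cdf_of_V
    {Ω : Type*} [MeasurableSpace Ω] (μ : Measure Ω) [IsProbabilityMeasure μ]
    {dz : ℕ} (Z : Ω → Fin dz → ℝ) (hZ : Measurable Z)
    (V : Ω → ℝ) (hV : Measurable V)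
    (hVatomless : ∀ v : ℝ, μ {ω | V ω = v} = 0)
    (h : (Fin dz → ℝ) → ℝ → ℝ)
    (hhmeas : Measurable fun p : (Fin dz → ℝ) × ℝ => h p.1 p.2)
    (hhmono : ∀ z, StrictMono (h z))
    (X : Ω → ℝ) (hX : X = fun ω => h (Z ω) (V ω))
    (hindep : IndepFun V Z μ)
    (F : (Fin dz → ℝ) → ℝ → ℝ) (hF : IsRegCondCDF μ X Z F) :
    ∀ᵐ ω ∂μ, F (Z ω) (X ω) = (μ {ω' | V ω' ≤ V ω}).toReal := by
  classical
  have hXmeas : Measurable X := by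
    rw [hX]; exact hhmeas.comp (hZ.prodMk hV)
  set ρ : Measure ℝ := μ.map V with hρdef
  haveI hρP : IsProbabilityMeasure ρ := Measure.isProbabilityMeasure_map hV.aemeasurable
  set ν : Measure (Fin dz → ℝ) := μ.map Z with hνdef
  haveI hνP : IsProbabilityMeasure ν := Measure.isProbabilityMeasure_map hZ.aemeasurable
  have hhz : ∀ z, Measurable (h z) := fun z => hhmeas.comp measurable_prodMk_left
  set g : ℝ → (Fin dz → ℝ) → ℝ := fun x z => (ρ {v | h z v ≤ x}).toReal with hgdef
  have hφmeas : ∀ x : ℝ, Measurable fun z => ρ {v | h z v ≤ x} := by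
    intro x
    exact measurable_measure_prodMk_left (measurableSet_le hhmeas measurable_const)
  have hm : MeasurableSpace.comap Z inferInstance ≤ ‹MeasurableSpace Ω› := hZ.comap_le
  haveI : SigmaFinite (μ.trim hm) := by
    have : IsFiniteMeasure (μ.trim hm) := isFiniteMeasure_trim hm
    infer_instance
  have hmap : μ.map (fun ω => (Z ω, V ω)) = ν.prod ρ :=
    (ProbabilityTheory.indepFun_iff_map_prod_eq_prod_map_map hZ.aemeasurable
      hV.aemeasurable).mp hindep.symm
  -- Step B: g x ∘ Z is a version of the conditional expectation
  have hB : ∀ x : ℝ, (fun ω => g x (Z ω)) =ᵐ[μ]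
      μ[Set.indicator {ω | X ω ≤ x} (fun _ => (1 : ℝ))
        | MeasurableSpace.comap Z inferInstance] := by
    intro x
    have hsX : MeasurableSet {ω | X ω ≤ x} := measurableSet_le hXmeas measurable_const
    have hf_int : Integrable (Set.indicator {ω | X ω ≤ x} (fun _ => (1 : ℝ))) μ :=
      (integrable_const (1 : ℝ)).indicator hsX
    have hgmeas : Measurable fun ω => g x (Z ω) := ((hφmeas x).ennreal_toReal).comp hZ
    have hgbd : ∀ ω, ‖g x (Z ω)‖ ≤ 1 := by
      intro ω
      rw [Real.norm_eq_abs, abs_of_nonneg ENNReal.toReal_nonneg]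
      exact ENNReal.toReal_le_of_le_ofReal one_pos.le (by simpa using prob_le_one)
    have hg_int : Integrable (fun ω => g x (Z ω)) μ :=
      (integrable_const (1 : ℝ)).mono' hgmeas.aestronglyMeasurable (ae_of_all _ hgbd)
    refine ae_eq_condExp_of_forall_setIntegral_eq hm hf_int
      (fun s _ _ => hg_int.integrableOn) (fun s hs _ => ?_) ?_
    · obtain ⟨A, hA, rfl⟩ := hs
      have hsP : MeasurableSet {p : (Fin dz → ℝ) × ℝ | h p.1 p.2 ≤ x} :=
        measurableSet_le hhmeas measurable_const
      have htP : MeasurableSet ((A ×ˢ Set.univ) ∩ {p : (Fin dz → ℝ) × ℝ | h p.1 p.2 ≤ x}) :=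
        (hA.prod MeasurableSet.univ).inter hsP
      -- LHS
      have hL1 : ∫ ω in Z ⁻¹' A, g x (Z ω) ∂μ = ∫ z in A, g x z ∂ν := by
        rw [hνdef, setIntegral_map hA ((hφmeas x).ennreal_toReal).aestronglyMeasurable
          hZ.aemeasurable]
      have hL2 : ∫ z in A, g x z ∂ν = (∫⁻ z in A, ρ {v | h z v ≤ x} ∂ν).toReal := by
        refine integral_toReal ((hφmeas x).aemeasurable.restrict) (ae_of_all _ fun z => ?_)
        exact lt_of_le_of_lt prob_le_one ENNReal.one_lt_top
      have hL3 : ∫⁻ z in A, ρ {v | h z v ≤ x} ∂ν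
          = (ν.prod ρ) ((A ×ˢ Set.univ) ∩ {p : (Fin dz → ℝ) × ℝ | h p.1 p.2 ≤ x}) := by
        rw [Measure.prod_apply htP]
        rw [← lintegral_indicator hA]
        refine lintegral_congr fun z => ?_
        by_cases hz : z ∈ A
        · have : (Prod.mk z ⁻¹' ((A ×ˢ Set.univ) ∩ {p : (Fin dz → ℝ) × ℝ | h p.1 p.2 ≤ x}))
              = {v | h z v ≤ x} := by
            ext v; simp [hz]
          rw [Set.indicator_of_mem hz, this]
        · have : (Prod.mk z ⁻¹' ((A ×ˢ Set.univ) ∩ {p : (Fin dz → ℝ) × ℝ | h p.1 p.2 ≤ x}))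
              = ∅ := by
            ext v; simp [hz]
          rw [Set.indicator_of_notMem hz, this, measure_empty]
      -- RHS
      have hR1 : ∫ ω in Z ⁻¹' A, Set.indicator {ω | X ω ≤ x} (fun _ => (1 : ℝ)) ω ∂μ
          = (μ (Z ⁻¹' A ∩ {ω | X ω ≤ x})).toReal := by
        rw [setIntegral_indicator hsX, setIntegral_const, smul_eq_mul, mul_one, measureReal_def]
      have hset : Z ⁻¹' A ∩ {ω | X ω ≤ x}
          = (fun ω => (Z ω, V ω)) ⁻¹' ((A ×ˢ Set.univ) ∩ {p : (Fin dz → ℝ) × ℝ | h p.1 p.2 ≤ x}) := by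
        ext ω; simp [hX]
      have hR2 : μ (Z ⁻¹' A ∩ {ω | X ω ≤ x})
          = (ν.prod ρ) ((A ×ˢ Set.univ) ∩ {p : (Fin dz → ℝ) × ℝ | h p.1 p.2 ≤ x}) := by
        rw [hset, ← hmap, Measure.map_apply (hZ.prodMk hV) htP]
      rw [hL1, hL2, hL3, hR1, hR2]
    · refine StronglyMeasurable.aestronglyMeasurable ?_
      exact (((hφmeas x).ennreal_toReal).comp
        (comap_measurable Z)).stronglyMeasurable
  -- Step C: agreement at rationals, a.e.
  have hFg : ∀ᵐ ω ∂μ, ∀ q : ℚ, F (Z ω) (q : ℝ) = g (q : ℝ) (Z ω) := by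
    rw [ae_all_iff]
    intro q
    filter_upwards [hF.2.2.2 (q : ℝ), hB (q : ℝ)] with ω h1 h2
    rw [h1, ← h2]
  -- Conclusion
  filter_upwards [hFg] with ω Hω
  set z := Z ω with hz
  -- g as a cdf
  haveI : IsProbabilityMeasure (ρ.map (h z)) := Measure.isProbabilityMeasure_map (hhz z).aemeasurable
  have hgcdf : ∀ x' : ℝ, g x' z = cdf (ρ.map (h z)) x' := by
    intro x'
    rw [cdf_eq_real, measureReal_def, Measure.map_apply (hhz z) measurableSet_Iic]
    rfl
  -- F z = g · z everywhere
  have hall : ∀ x' : ℝ, F z x' = g x' z := by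
    intro x'
    obtain ⟨u, hu1, hu2⟩ : ∃ u : ℕ → ℚ, (∀ n, x' < (u n : ℝ)) ∧
        (∀ n, (u n : ℝ) < x' + 1 / (n + 1)) := by
      have : ∀ n : ℕ, ∃ q : ℚ, x' < (q : ℝ) ∧ (q : ℝ) < x' + 1 / (n + 1) := by
        intro n
        exact exists_rat_btwn (lt_add_of_pos_right x' (by positivity))
      choose u h1 h2 using this
      exact ⟨u, h1, h2⟩
    have hten : Filter.Tendsto (fun n => ((u n : ℝ))) Filter.atTop (nhds x') := by
      have hup : Filter.Tendsto (fun n : ℕ => x' + 1 / (n + 1 : ℝ)) Filter.atTop (nhds x') := by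
        simpa using (tendsto_const_nhds (x := x')).add
          tendsto_one_div_add_atTop_nhds_zero_nat
      exact tendsto_of_tendsto_of_tendsto_of_le_of_le tendsto_const_nhds hup
        (fun n => (hu1 n).le) (fun n => (hu2 n).le)
    have htenI : Filter.Tendsto (fun n => ((u n : ℝ))) Filter.atTop
        (nhdsWithin x' (Set.Ici x')) :=
      tendsto_nhdsWithin_of_tendsto_nhds_of_eventually_within _ hten
        (Filter.Eventually.of_forall fun n => (hu1 n).le)
    have hFten : Filter.Tendsto (fun n => F z (u n : ℝ)) Filter.atTop (nhds (F z x')) :=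
      (hF.2.1 z x').tendsto.comp htenI
    have hgten : Filter.Tendsto (fun n => g ((u n : ℝ)) z) Filter.atTop (nhds (g x' z)) := by
      have := ((cdf (ρ.map (h z))).right_continuous x').tendsto.comp htenI
      simpa [hgcdf, Function.comp_def] using this
    have heq : (fun n => F z (u n : ℝ)) = fun n => g ((u n : ℝ)) z := by
      funext n; exact Hω (u n)
    rw [heq] at hFten
    exact tendsto_nhds_unique hFten hgten
  have hXω : X ω = h z (V ω) := by rw [hX]
  rw [hXω, hall]
  have hsetV : {v | h z v ≤ h z (V ω)} = Set.Iic (V ω) := by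
    ext v
    simp [(hhmono z).le_iff_le]
  have : {ω' | V ω' ≤ V ω} = V ⁻¹' Set.Iic (V ω) := rfl
  rw [this, ← Measure.map_apply hV measurableSet_Iic]
  show (ρ {v | h z v ≤ h z (V ω)}).toReal = _
  rw [hsetV]
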